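/- Let ρ_A and ρ_B be convex risk measures on X such that (ρ_A □ ρ_B)(0) > −∞, i.e. there exists c ∈ ℝ with ρ_A(−H) + ρ_B(H) ≥ c for all H ∈ X. Then for every Ψ ∈ X the set { ρ_A(Ψ − H) + ρ_B(H) : H ∈ X } is bounded below, and the inf-convolution ρ_{A,B}(Ψ) = (ρ_A □ ρ_B)(Ψ) defines a real-valued convex risk measure on X: it is convex, monotone, and cash translation invariant. -/

import Mathlib

open BoundedContinuousFunction

/-- A (monetary) convex risk measure on the space `Ω →ᵇ ℝ` of bounded functions on `Ω`. -/
def IsConvexRiskMeasure {Ω : Type*} [TopologicalSpace Ω] (ρ : (Ω →ᵇ ℝ) → ℝ) : Prop :=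
  (∀ (Φ Ψ : Ω →ᵇ ℝ) (l : ℝ), 0 ≤ l → l ≤ 1 →
      ρ (l • Φ + (1 - l) • Ψ) ≤ l * ρ Φ + (1 - l) * ρ Ψ) ∧
  (∀ Φ Ψ : Ω →ᵇ ℝ, (∀ ω, Φ ω ≤ Ψ ω) → ρ Ψ ≤ ρ Φ) ∧
  (∀ (Φ : Ω →ᵇ ℝ) (m : ℝ), ρ (Φ + BoundedContinuousFunction.const Ω m) = ρ Φ - m)

/-- If `(ρ_A □ ρ_B)(0) > -∞` (i.e. `ρ_A(-H) + ρ_B(H)` is uniformly bounded below),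
then the inf-convolution `Ψ ↦ inf_H (ρ_A(Ψ - H) + ρ_B(H))` is everywhere bounded
below and defines a real-valued convex risk measure. -/
theorem stmt7 {Ω : Type*} [TopologicalSpace Ω] [DiscreteTopology Ω] [Nonempty Ω]
    (ρA ρB : (Ω →ᵇ ℝ) → ℝ)
    (hA : IsConvexRiskMeasure ρA) (hB : IsConvexRiskMeasure ρB)
    (c : ℝ) (hc : ∀ H : Ω →ᵇ ℝ, c ≤ ρA (-H) + ρB H) :
    (∀ Ψ : Ω →ᵇ ℝ, BddBelow (Set.range fun H : Ω →ᵇ ℝ => ρA (Ψ - H) + ρB H)) ∧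
    IsConvexRiskMeasure (fun Ψ : Ω →ᵇ ℝ => ⨅ H : Ω →ᵇ ℝ, (ρA (Ψ - H) + ρB H)) := by
  obtain ⟨hAconv, hAmono, hAcash⟩ := hA
  obtain ⟨hBconv, hBmono, hBcash⟩ := hB
  -- pointwise lower bound
  have key : ∀ Ψ H : Ω →ᵇ ℝ, c - ‖Ψ‖ ≤ ρA (Ψ - H) + ρB H := by
    intro Ψ H
    have h1 : ∀ ω, (Ψ - H) ω ≤ (-H + BoundedContinuousFunction.const Ω ‖Ψ‖) ω := by
      intro ω
      simp only [BoundedContinuousFunction.coe_sub, BoundedContinuousFunction.coe_add,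
        BoundedContinuousFunction.coe_neg, BoundedContinuousFunction.const_apply, Pi.sub_apply,
        Pi.add_apply, Pi.neg_apply]
      have h := Ψ.norm_coe_le_norm ω
      rw [Real.norm_eq_abs] at h
      have := le_of_abs_le h
      linarith
    have h2 := hAmono _ _ h1
    rw [hAcash] at h2
    have := hc H
    linarith
  have hbdd : ∀ Ψ : Ω →ᵇ ℝ, BddBelow (Set.range fun H : Ω →ᵇ ℝ => ρA (Ψ - H) + ρB H) := by
    intro Ψ
    exact ⟨c - ‖Ψ‖, by rintro x ⟨H, rfl⟩; exact key Ψ H⟩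
  refine ⟨hbdd, ?_, ?_, ?_⟩
  · -- convexity
    intro Φ Ψ l hl0 hl1
    have h1l : (0:ℝ) ≤ 1 - l := by linarith
    rw [Real.mul_iInf_of_nonneg hl0, Real.mul_iInf_of_nonneg h1l]
    refine le_ciInf_add_ciInf ?_
    intro i j
    have heq : l • Φ + (1 - l) • Ψ - (l • i + (1 - l) • j)
        = l • (Φ - i) + (1 - l) • (Ψ - j) := by
      simp only [smul_sub]; abel
    calc ⨅ H : Ω →ᵇ ℝ, (ρA (l • Φ + (1 - l) • Ψ - H) + ρB H)
        ≤ ρA (l • Φ + (1 - l) • Ψ - (l • i + (1 - l) • j)) + ρB (l • i + (1 - l) • j) :=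
          ciInf_le (hbdd _) _
      _ ≤ (l * ρA (Φ - i) + (1 - l) * ρA (Ψ - j)) + (l * ρB i + (1 - l) * ρB j) := by
          rw [heq]
          exact add_le_add (hAconv _ _ l hl0 hl1) (hBconv _ _ l hl0 hl1)
      _ = l * (ρA (Φ - i) + ρB i) + (1 - l) * (ρA (Ψ - j) + ρB j) := by ring
  · -- monotonicity
    intro Φ Ψ hle
    refine ciInf_mono (hbdd Ψ) fun H => ?_
    have : ∀ ω, (Φ - H) ω ≤ (Ψ - H) ω := fun ω => by
      simp only [BoundedContinuousFunction.coe_sub, Pi.sub_apply]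
      linarith [hle ω]
    exact add_le_add_left (hAmono _ _ this) _
  · -- cash invariance
    intro Φ m
    have heq : ∀ H : Ω →ᵇ ℝ,
        ρA (Φ + BoundedContinuousFunction.const Ω m - H) + ρB H
          = (ρA (Φ - H) + ρB H) - m := by
      intro H
      have : Φ + BoundedContinuousFunction.const Ω m - H
          = (Φ - H) + BoundedContinuousFunction.const Ω m := by abel
      rw [this, hAcash]; ring
    simp only [heq]
    exact (ciInf_sub (hbdd Φ) m).symm
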